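/- (Dilation lemma) Let Γ be a countable abelian group, F a finite subset of Γ with 0 ∈ F, ℓ a positive integer, and f : Γ → Z a bounded function with 1_F * f = ℓ. Let q1 be the product of all primes p ≤ (max f − min f)·|F|, let q2 be the product of the orders of all torsion elements of F − F, and set q = q1·q2. Then for every positive integer r with r ≡ 1 (mod q), one has 1_{rF} * f = ℓ, where rF = { r·v : v ∈ F }. -/

import Mathlib

open scoped Classical Pointwise

section DilationAux

open AddMonoidAlgebra

variable {Γ : Type*} [AddCommGroup Γ] [DecidableEq Γ]

/-- Evaluation of a group-algebra element against `f` at `x`. -/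
noncomputable def EE {R : Type*} [CommRing R] (f : Γ → R) (x : Γ)
    (g : AddMonoidAlgebra R Γ) : R :=
  Finsupp.sum g.coeff fun a c => c * f (x - a)

lemma EE_zero {R : Type*} [CommRing R] (f : Γ → R) (x : Γ) : EE f x 0 = 0 :=
  Finsupp.sum_zero_index

lemma EE_single {R : Type*} [CommRing R] (f : Γ → R) (x a : Γ) (c : R) :
    EE f x (AddMonoidAlgebra.single a c) = c * f (x - a) :=
  Finsupp.sum_single_index (zero_mul _)

lemma EE_add {R : Type*} [CommRing R] (f : Γ → R) (x : Γ) (g h : AddMonoidAlgebra R Γ) :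
    EE f x (g + h) = EE f x g + EE f x h :=
  Finsupp.sum_add_index' (fun _ => zero_mul _) (fun _ b c => add_mul b c _)

lemma EE_finset_sum {R : Type*} [CommRing R] (f : Γ → R) (x : Γ) {ι : Type*}
    (s : Finset ι) (g : ι → AddMonoidAlgebra R Γ) :
    EE f x (∑ i ∈ s, g i) = ∑ i ∈ s, EE f x (g i) := by
  classical
  induction s using Finset.induction_on with
  | empty => simp [EE_zero]
  | insert _ _ hx ih => rw [Finset.sum_insert hx, Finset.sum_insert hx, EE_add, ih]

lemma EE_mul_single {R : Type*} [CommRing R] (f : Γ → R) (x b : Γ)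
    (g : AddMonoidAlgebra R Γ) :
    EE f x (g * AddMonoidAlgebra.single b 1) = EE f (x - b) g := by
  induction g using AddMonoidAlgebra.induction_linear with
  | zero => simp [EE_zero]
  | add g h hg hh => rw [add_mul, EE_add, EE_add, hg, hh]
  | single a c =>
      rw [AddMonoidAlgebra.single_mul_single, EE_single, EE_single, mul_one]
      congr 2
      abel

/-- The main "prime dilation" step. -/
lemma prime_step (F : Finset Γ) (hFne : F.Nonempty) (f : Γ → ℤ) (ℓ M m : ℤ)
    (hM : ∀ x, f x ≤ M) (hm : ∀ x, m ≤ f x)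
    (htile : ∀ x, ∑ y ∈ F, f (x - y) = ℓ)
    (p : ℕ) (hp : p.Prime) (hpN : (M - m) * F.card < (p : ℤ)) (hmm : m < M)
    (t : ℕ) (ht : ∀ x, ∑ y ∈ F, f (x - t • y) = ℓ) :
    ∀ x, ∑ y ∈ F, f (x - (p * t) • y) = ℓ := by
  haveI : Fact p.Prime := ⟨hp⟩
  intro x
  -- group algebra element
  set u : AddMonoidAlgebra ℤ Γ := ∑ y ∈ F, AddMonoidAlgebra.single (t • y) (1 : ℤ) with hu
  have hEu : ∀ z : Γ, EE f z u = ℓ := by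
    intro z
    rw [hu, EE_finset_sum]
    simpa [EE_single] using ht z
  have hmulu : ∀ (z : Γ) (g : AddMonoidAlgebra ℤ Γ),
      EE f z (g * u) = ∑ y ∈ F, EE f (z - t • y) g := by
    intro z g
    rw [hu, Finset.mul_sum, EE_finset_sum]
    exact Finset.sum_congr rfl fun y _ => EE_mul_single f z (t • y) g
  have hpow : ∀ (k : ℕ) (z : Γ), EE f z (u ^ (k + 1)) = ℓ * (F.card : ℤ) ^ k := by
    intro k
    induction k with
    | zero => intro z; simpa using hEu z
    | succ k ih =>
        intro z
        rw [pow_succ, hmulu]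
        have : ∀ y ∈ F, EE f (z - t • y) (u ^ (k + 1)) = ℓ * (F.card : ℤ) ^ k :=
          fun y _ => ih _
        rw [Finset.sum_congr rfl this, Finset.sum_const, nsmul_eq_mul]
        ring
  -- the mod-p reduction
  haveI : CharP (AddMonoidAlgebra (ZMod p) Γ) p := by
    refine charP_of_injective_ringHom (f := (AddMonoidAlgebra.singleZeroRingHom :
      ZMod p →+* AddMonoidAlgebra (ZMod p) Γ)) ?_ p
    intro r s h
    have h' : (AddMonoidAlgebra.single (0 : Γ) r : AddMonoidAlgebra (ZMod p) Γ)
        = AddMonoidAlgebra.single 0 s := h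
    exact AddMonoidAlgebra.single_right_injective h'
  haveI : ExpChar (AddMonoidAlgebra (ZMod p) Γ) p := ExpChar.prime hp
  set φ : AddMonoidAlgebra ℤ Γ →+* AddMonoidAlgebra (ZMod p) Γ :=
    AddMonoidAlgebra.liftNCRingHom
      ((AddMonoidAlgebra.singleZeroRingHom).comp (Int.castRingHom (ZMod p)))
      (AddMonoidAlgebra.of (ZMod p) Γ) (fun _ _ => Commute.all _ _) with hφ
  have hφ_single : ∀ (a : Γ) (c : ℤ),
      φ (AddMonoidAlgebra.single a c) = AddMonoidAlgebra.single a ((c : ZMod p)) := by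
    intro a c
    rw [hφ]
    show AddMonoidAlgebra.liftNC _ _ (AddMonoidAlgebra.single a c) = _
    rw [AddMonoidAlgebra.liftNC_single]
    show AddMonoidAlgebra.single 0 ((c : ZMod p)) * AddMonoidAlgebra.single a 1 = _
    rw [AddMonoidAlgebra.single_mul_single, zero_add, mul_one]
  have hcast : ∀ (z : Γ) (g : AddMonoidAlgebra ℤ Γ),
      ((EE f z g : ℤ) : ZMod p) = EE (fun a => ((f a : ℤ) : ZMod p)) z (φ g) := by
    intro z g
    induction g using AddMonoidAlgebra.induction_linear with
    | zero => simp [EE_zero]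
    | add g h hg hh => rw [EE_add, map_add, EE_add, Int.cast_add, hg, hh]
    | single a c =>
        rw [hφ_single, EE_single, EE_single]
        push_cast
        ring
  -- Frobenius
  have hfrob : φ (u ^ p) = ∑ y ∈ F, AddMonoidAlgebra.single ((p * t) • y) (1 : ZMod p) := by
    rw [map_pow, hu, map_sum]
    have h1 : ∀ y ∈ F, φ (AddMonoidAlgebra.single (t • y) (1 : ℤ))
        = AddMonoidAlgebra.single (t • y) (1 : ZMod p) := by
      intro y _; rw [hφ_single]; norm_num
    rw [Finset.sum_congr rfl h1, sum_pow_char]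
    refine Finset.sum_congr rfl fun y _ => ?_
    rw [AddMonoidAlgebra.single_pow, one_pow, smul_smul]
  -- put things together
  set S : ℤ := ∑ y ∈ F, f (x - (p * t) • y) with hS
  have hw : S = EE f x (∑ y ∈ F, AddMonoidAlgebra.single ((p * t) • y) (1 : ℤ)) := by
    rw [EE_finset_sum]
    simp [EE_single, hS]
  have hφw : φ (∑ y ∈ F, AddMonoidAlgebra.single ((p * t) • y) (1 : ℤ)) = φ (u ^ p) := by
    rw [map_sum, hfrob]
    refine Finset.sum_congr rfl fun y _ => ?_
    rw [hφ_single]; norm_num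
  have hSmod : ((S : ℤ) : ZMod p) = ((ℓ * (F.card : ℤ) ^ (p - 1) : ℤ) : ZMod p) := by
    rw [hw, hcast, hφw, ← hcast]
    congr 1
    have hp1 : p - 1 + 1 = p := Nat.succ_pred_eq_of_pos hp.pos
    rw [← hp1, hpow (p - 1) x]
    norm_num
  have hcard : ¬ (p : ℕ) ∣ F.card := by
    intro hdvd
    have h1 : (1 : ℤ) ≤ M - m := by omega
    have h2 : (F.card : ℤ) ≤ (M - m) * F.card := by
      nlinarith [Int.natCast_nonneg F.card]
    have h3 : p ≤ F.card := Nat.le_of_dvd (Finset.card_pos.mpr hFne) hdvd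
    have : (p : ℤ) ≤ (F.card : ℤ) := Nat.cast_le.mpr h3
    omega
  have hfermat : ((F.card : ZMod p)) ^ (p - 1) = 1 := by
    apply ZMod.pow_card_sub_one_eq_one
    simpa [ZMod.natCast_eq_zero_iff] using hcard
  have hdvd : (p : ℤ) ∣ S - ℓ := by
    rw [← ZMod.intCast_zmod_eq_zero_iff_dvd]
    push_cast
    rw [show ((S : ℤ) : ZMod p) = ((ℓ * (F.card : ℤ) ^ (p - 1) : ℤ) : ZMod p) from hSmod]
    push_cast
    rw [hfermat]
    ring
  have hbound : |S - ℓ| ≤ (M - m) * F.card := by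
    have : S - ℓ = ∑ y ∈ F, (f (x - (p * t) • y) - f (x - y)) := by
      rw [Finset.sum_sub_distrib, ← hS, htile x]
    rw [this]
    calc |∑ y ∈ F, (f (x - (p * t) • y) - f (x - y))|
        ≤ ∑ y ∈ F, |f (x - (p * t) • y) - f (x - y)| := Finset.abs_sum_le_sum_abs _ _
      _ ≤ ∑ y ∈ F, (M - m) := by
          refine Finset.sum_le_sum fun y _ => ?_
          rw [abs_le]
          constructor <;>
            [linarith [hm (x - (p * t) • y), hM (x - y)];
             linarith [hM (x - (p * t) • y), hm (x - y)]]
      _ = (M - m) * F.card := by rw [Finset.sum_const, nsmul_eq_mul]; ring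
  have : S - ℓ = 0 := Int.eq_zero_of_abs_lt_dvd hdvd (lt_of_le_of_lt hbound hpN)
  omega

end DilationAux

theorem stmt_6 (Γ : Type*) [AddCommGroup Γ] [Countable Γ] [DecidableEq Γ]
    (F : Finset Γ) (h0F : (0 : Γ) ∈ F) (ℓ : ℕ) (hℓ : 0 < ℓ)
    (f : Γ → ℤ) (M m : ℤ) (hM : ∀ x, f x ≤ M) (hm : ∀ x, m ≤ f x)
    (htile : ∀ x, ∑ y ∈ F, f (x - y) = (ℓ : ℤ))
    (q1 q2 q : ℕ)
    (hq1 : q1 = ∏ p ∈ (Finset.range (((M - m) * F.card).toNat + 1)).filter Nat.Prime, p)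
    (hq2 : q2 = ∏ v ∈ (F - F).filter (fun v => addOrderOf v ≠ 0), addOrderOf v)
    (hq : q = q1 * q2) :
    ∀ r : ℕ, 0 < r → r ≡ 1 [MOD q] →
      ∀ x, ∑ y ∈ F.image (fun v => r • v), f (x - y) = (ℓ : ℤ) := by
  intro r hr hmod x
  have hFne : F.Nonempty := ⟨0, h0F⟩
  -- injectivity of dilation on F
  have hmod2 : r ≡ 1 [MOD q2] := hmod.of_dvd (hq ▸ dvd_mul_left q2 q1)
  have hinj : ∀ y ∈ F, ∀ y' ∈ F, r • y = r • y' → y = y' := by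
    intro y hy y' hy' h
    have hv : y - y' ∈ F - F := Finset.sub_mem_sub hy hy'
    have hrv : r • (y - y') = 0 := by rw [smul_sub, h, sub_self]
    by_cases hord : addOrderOf (y - y') = 0
    · exfalso
      have : addOrderOf (y - y') ∣ r := addOrderOf_dvd_iff_nsmul_eq_zero.mpr hrv
      rw [hord] at this
      omega
    · have hd : addOrderOf (y - y') ∣ q2 := by
        rw [hq2]
        exact Finset.dvd_prod_of_mem _ (Finset.mem_filter.mpr ⟨hv, hord⟩)
      have hmodd : r ≡ 1 [MOD addOrderOf (y - y')] := hmod2.of_dvd hd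
      have hdvd : ((addOrderOf (y - y') : ℕ) : ℤ) ∣ (1 : ℤ) - (r : ℤ) := hmodd.dvd
      have h1 : ((1 : ℤ) - (r : ℤ)) • (y - y') = 0 :=
        addOrderOf_dvd_iff_zsmul_eq_zero.mp hdvd
      have h2 : (r : ℤ) • (y - y') = 0 := by
        rw [natCast_zsmul]; exact hrv
      have : y - y' = 0 := by
        have := sub_eq_zero.mpr (rfl : ((1:ℤ) • (y - y')) = (1:ℤ) • (y - y'))
        calc y - y' = (1 : ℤ) • (y - y') := (one_zsmul _).symm
          _ = ((1 : ℤ) - (r : ℤ)) • (y - y') + (r : ℤ) • (y - y') := by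
              rw [← add_zsmul]; ring_nf
          _ = 0 := by rw [h1, h2, add_zero]
      exact sub_eq_zero.mp this
  rw [Finset.sum_image (fun y hy y' hy' h => hinj y hy y' hy' h)]
  -- now prove the multiplicity version
  by_cases hmm : m < M
  · -- key claim by strong induction
    have key : ∀ s : ℕ, 0 < s → Nat.Coprime s q1 →
        ∀ z, ∑ y ∈ F, f (z - s • y) = (ℓ : ℤ) := by
      intro s
      induction s using Nat.strong_induction_on with
      | _ s ih =>
        intro hs hcop z
        rcases eq_or_lt_of_le (Nat.one_le_iff_ne_zero.mpr (Nat.pos_iff_ne_zero.mp hs)) with h1 | h1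
        · simp only [← h1, one_smul]
          exact htile z
        · set p := s.minFac with hpdef
          have hp : p.Prime := Nat.minFac_prime (by omega)
          have hps : p ∣ s := Nat.minFac_dvd s
          obtain ⟨t, hts⟩ := hps
          have htpos : 0 < t := by
            rcases Nat.eq_zero_or_pos t with h | h
            · subst h; simp at hts; omega
            · exact h
          have htlt : t < s := by
            have hp2 : 2 ≤ p := hp.two_le
            calc t < p * t := by nlinarith
              _ = s := hts.symm
          have hcopt : Nat.Coprime t q1 :=
            Nat.Coprime.coprime_dvd_left ⟨p, by rw [hts, mul_comm]⟩ hcop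
          have ht := ih t htlt htpos hcopt
          have hpq1 : ¬ p ∣ q1 := by
            intro hdvd
            have hc : Nat.Coprime p q1 := Nat.Coprime.coprime_dvd_left ⟨t, hts⟩ hcop
            have hg : p ∣ Nat.gcd p q1 := Nat.dvd_gcd dvd_rfl hdvd
            rw [Nat.coprime_iff_gcd_eq_one.mp hc] at hg
            have := Nat.le_of_dvd one_pos hg
            have := hp.two_le
            omega
          have hple : ((M - m) * F.card).toNat < p := by
            by_contra hle
            push_neg at hle
            apply hpq1
            rw [hq1]
            refine Finset.dvd_prod_of_mem _ ?_
            exact Finset.mem_filter.mpr ⟨Finset.mem_range.mpr (by omega), hp⟩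
          have hpN : (M - m) * F.card < (p : ℤ) := by
            have h0 : (0 : ℤ) ≤ (M - m) * F.card := by
              have : (0:ℤ) ≤ (F.card : ℤ) := Int.natCast_nonneg _
              nlinarith
            have := Int.self_le_toNat ((M - m) * F.card)
            have : (((M - m) * F.card).toNat : ℤ) < (p : ℤ) := Nat.cast_lt.mpr hple
            omega
          have := prime_step F hFne f (ℓ : ℤ) M m hM hm htile p hp hpN hmm t ht
          rw [hts]
          exact this z
    have hmod1 : r ≡ 1 [MOD q1] := hmod.of_dvd (hq ▸ dvd_mul_right q1 q2)
    have hcop : Nat.Coprime r q1 := by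
      have h1 : r % q1 = 1 % q1 := hmod1
      rw [Nat.coprime_iff_gcd_eq_one, Nat.gcd_comm, Nat.gcd_rec, h1, ← Nat.gcd_rec,
        Nat.gcd_one_right]
    exact key r hr hcop x
  · -- constant case: f ≡ m
    have hMm : M = m := le_antisymm (by omega) (le_trans (hm 0) (hM 0))
    have hconst : ∀ z, f z = m := fun z => le_antisymm (hMm ▸ hM z) (hm z)
    have h1 : ∑ y ∈ F, f (x - r • y) = (F.card : ℤ) * m := by
      rw [Finset.sum_congr rfl fun y _ => hconst (x - r • y), Finset.sum_const,
        nsmul_eq_mul]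
    have h2 : (F.card : ℤ) * m = (ℓ : ℤ) := by
      rw [← htile x, Finset.sum_congr rfl fun y _ => hconst (x - y), Finset.sum_const,
        nsmul_eq_mul]
    rw [h1, h2]
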